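/- Let C be a closed convex subset of a finite-dimensional real inner product space E and let k ≥ 1 be a natural number. Then the set of points x ∈ C of rank at most k, i.e. the set {x ∈ C : every linear subspace V of E with V ⊆ K_x C satisfies dim V ≤ k}, is countably k-rectifiable: there exists a sequence of Lipschitz maps f_n : ℝ^k → E (n ∈ ℕ) such that this set is contained in the union of the images of the f_n. -/

import Mathlib

open Set Module Function
open scoped RealInnerProductSpace

set_option maxHeartbeats 1000000
set_option synthInstance.maxHeartbeats 1000000

/-- The tangent cone of a convex set `C` at a point `x`: the closure of the set of all
nonnegative multiples of differences `z - x` with `z ∈ C`. -/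
def convexTangentCone {E : Type*} [NormedAddCommGroup E] [InnerProductSpace ℝ E]
    (C : Set E) (x : E) : Set E :=
  closure {v : E | ∃ l : ℝ, 0 ≤ l ∧ ∃ z ∈ C, v = l • (z - x)}

section Aux

variable {E : Type*} [NormedAddCommGroup E] [InnerProductSpace ℝ E]

/-- The normal cone of `C` at `x`. -/
def normalSet (C : Set E) (x : E) : Set E := {v : E | ∀ z ∈ C, ⟪v, z - x⟫ ≤ 0}

lemma normalSet_zero_mem (C : Set E) (x : E) : (0 : E) ∈ normalSet C x := by
  intro z hz; simp

lemma normalSet_add {C : Set E} {x v w : E} (hv : v ∈ normalSet C x) (hw : w ∈ normalSet C x) :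
    v + w ∈ normalSet C x := by
  intro z hz
  have := add_nonpos (hv z hz) (hw z hz)
  simpa [inner_add_left] using this

lemma normalSet_smul {C : Set E} {x v : E} {c : ℝ} (hc : 0 ≤ c) (hv : v ∈ normalSet C x) :
    c • v ∈ normalSet C x := by
  intro z hz
  rw [real_inner_smul_left]
  exact mul_nonpos_of_nonneg_of_nonpos hc (hv z hz)

lemma normalSet_sum {C : Set E} {x : E} {ι : Type*} (s : Finset ι) (f : ι → E)
    (hf : ∀ i ∈ s, f i ∈ normalSet C x) : (∑ i ∈ s, f i) ∈ normalSet C x := by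
  classical
  induction s using Finset.induction with
  | empty => simpa using normalSet_zero_mem C x
  | insert _ _ hni ih =>
    rename_i a s
    rw [Finset.sum_insert hni]
    exact normalSet_add (hf a (Finset.mem_insert_self a s))
      (ih fun i hi => hf i (Finset.mem_insert_of_mem hi))

lemma convex_pre_tangent {C : Set E} (hC : Convex ℝ C) (x : E) (hx : x ∈ C) :
    Convex ℝ {v : E | ∃ l : ℝ, 0 ≤ l ∧ ∃ z ∈ C, v = l • (z - x)} := by
  rintro v ⟨l₁, hl₁, z₁, hz₁, rfl⟩ w ⟨l₂, hl₂, z₂, hz₂, rfl⟩ a b ha hb hab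
  by_cases hs : a * l₁ + b * l₂ = 0
  · have h1 : a * l₁ = 0 := by nlinarith [mul_nonneg ha hl₁, mul_nonneg hb hl₂]
    have h2 : b * l₂ = 0 := by nlinarith [mul_nonneg ha hl₁, mul_nonneg hb hl₂]
    refine ⟨0, le_refl 0, x, hx, ?_⟩
    rw [smul_smul, smul_smul, h1, h2]; simp
  · have hspos : 0 < a * l₁ + b * l₂ :=
      lt_of_le_of_ne (by positivity) (Ne.symm hs)
    refine ⟨a * l₁ + b * l₂, le_of_lt hspos, (a * l₁ / (a * l₁ + b * l₂)) • z₁ +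
      (b * l₂ / (a * l₁ + b * l₂)) • z₂, hC hz₁ hz₂ (by positivity) (by positivity) (by field_simp), ?_⟩
    have e1 : (a * l₁ + b * l₂) * (a * l₁ / (a * l₁ + b * l₂)) = a * l₁ := by field_simp
    have e2 : (a * l₁ + b * l₂) * (b * l₂ / (a * l₁ + b * l₂)) = b * l₂ := by field_simp
    have key : (a * l₁ + b * l₂) • ((a * l₁ / (a * l₁ + b * l₂)) • z₁ +
        (b * l₂ / (a * l₁ + b * l₂)) • z₂ - x) = (a * l₁) • (z₁ - x) + (b * l₂) • (z₂ - x) := by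
      rw [smul_sub, smul_add, smul_smul, smul_smul, e1, e2]
      module
    rw [key]
    module

lemma smul_mem_convexTangentCone {C : Set E} {x : E} {v : E} {t : ℝ} (ht : 0 ≤ t) (hx : x ∈ C)
    (hv : v ∈ convexTangentCone C x) : t • v ∈ convexTangentCone C x := by
  rcases eq_or_lt_of_le ht with h | h
  · rw [← h, zero_smul]
    exact subset_closure ⟨0, le_refl 0, x, hx, by simp⟩
  · have hcont : Continuous fun y : E => t • y := continuous_const_smul t
    have : t • v ∈ closure ((fun y : E => t • y) ''
        {v : E | ∃ l : ℝ, 0 ≤ l ∧ ∃ z ∈ C, v = l • (z - x)}) :=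
      (hcont.continuousWithinAt).mem_closure_image hv
    refine closure_mono ?_ this
    rintro y ⟨w, ⟨l, hl, z, hz, rfl⟩, rfl⟩
    exact ⟨t * l, by positivity, z, hz, by simp [smul_smul]⟩

/-- The class of points admitting an `(r, ε)`-approximate normal frame near `p`. -/
def classSet (C : Set E) {m : ℕ} (r ε : ℝ) (p : E × (Fin m → E)) : Set E :=
  {x | x ∈ C ∧ ∃ (v : E) (e : Fin m → E), ‖v - p.1‖ ≤ ε ∧ (∀ i, ‖e i - p.2 i‖ ≤ ε) ∧
    ∀ (t : ℝ) (i : Fin m), |t| ≤ r → v + t • e i ∈ normalSet C x}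

lemma classSet_inner_est (C : Set E) {m : ℕ} {r ε : ℝ} (hr : 0 < r)
    {p : E × (Fin m → E)} {x y : E} (hx : x ∈ classSet C r ε p) (hy : y ∈ classSet C r ε p)
    (i : Fin m) : |⟪p.2 i, y - x⟫| ≤ (2 * ε / r + ε) * ‖y - x‖ := by
  obtain ⟨hxC, v, e, hvp, hep, hN⟩ := hx
  obtain ⟨hyC, v', e', hvp', hep', hN'⟩ := hy
  set d := y - x with hd
  have hvN : v ∈ normalSet C x := by
    have := hN 0 i (by simp [le_of_lt hr])
    simpa using this
  have hvN' : v' ∈ normalSet C y := by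
    have := hN' 0 i (by simp [le_of_lt hr])
    simpa using this
  have h1 : ⟪v, d⟫ ≤ 0 := hvN y hyC
  have h2 : 0 ≤ ⟪v', d⟫ := by
    have := hvN' x hxC
    have heq : x - y = -d := by simp [hd]
    rw [heq, inner_neg_right] at this
    linarith
  have hvv' : ‖v' - v‖ ≤ 2 * ε := by
    calc ‖v' - v‖ = ‖(v' - p.1) - (v - p.1)‖ := by congr 1; abel
      _ ≤ ‖v' - p.1‖ + ‖v - p.1‖ := norm_sub_le _ _
      _ ≤ ε + ε := add_le_add hvp' hvp
      _ = 2 * ε := by ring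
  have h4 : -⟪v, d⟫ ≤ 2 * ε * ‖d‖ := by
    have hsplit : ⟪v', d⟫ = ⟪v, d⟫ + ⟪v' - v, d⟫ := by
      rw [inner_sub_left]; ring
    have hcs : ⟪v' - v, d⟫ ≤ ‖v' - v‖ * ‖d‖ := real_inner_le_norm _ _
    nlinarith [norm_nonneg d, mul_le_mul_of_nonneg_right hvv' (norm_nonneg d)]
  have h5 : ∀ s : ℝ, |s| ≤ r → s * ⟪e i, d⟫ ≤ -⟪v, d⟫ := by
    intro s hs
    have := (hN s i hs) y hyC
    rw [inner_add_left, real_inner_smul_left] at this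
    linarith
  have h6 : |⟪e i, d⟫| * r ≤ -⟪v, d⟫ := by
    rcases abs_cases (⟪e i, d⟫) with ⟨habs, _⟩ | ⟨habs, _⟩
    · rw [habs, mul_comm]; exact h5 r (by rw [abs_of_pos hr])
    · rw [habs, mul_comm]
      have := h5 (-r) (by rw [abs_neg, abs_of_pos hr])
      linarith
  have h7 : |⟪e i, d⟫| ≤ 2 * ε / r * ‖d‖ := by
    rw [div_mul_eq_mul_div, le_div_iff₀ hr]
    nlinarith
  have h8 : |⟪p.2 i - e i, d⟫| ≤ ε * ‖d‖ := by
    calc |⟪p.2 i - e i, d⟫| ≤ ‖p.2 i - e i‖ * ‖d‖ := abs_real_inner_le_norm _ _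
      _ ≤ ε * ‖d‖ := by
          apply mul_le_mul_of_nonneg_right _ (norm_nonneg d)
          rw [← norm_neg]
          simpa [neg_sub] using hep i
  calc |⟪p.2 i, d⟫| = |⟪e i, d⟫ + ⟪p.2 i - e i, d⟫| := by rw [← inner_add_left]; congr 2; abel
    _ ≤ |⟪e i, d⟫| + |⟪p.2 i - e i, d⟫| := abs_add_le _ _
    _ ≤ 2 * ε / r * ‖d‖ + ε * ‖d‖ := add_le_add h7 h8
    _ = (2 * ε / r + ε) * ‖d‖ := by ring

variable [FiniteDimensional ℝ E]

/-- The orthogonal complement of the span of the normal cone is contained in the tangent cone. -/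
lemma orth_normal_subset_tangent {C : Set E} (hC : Convex ℝ C) {x : E} (hx : x ∈ C) :
    ((Submodule.span ℝ (normalSet C x))ᗮ : Set E) ⊆ convexTangentCone C x := by
  intro w hw
  by_contra hwK
  obtain ⟨f, u, hfu, hu⟩ := geometric_hahn_banach_closed_point
    (Convex.closure (convex_pre_tangent hC x hx)) isClosed_closure hwK
  have h0 : (0 : E) ∈ convexTangentCone C x :=
    subset_closure ⟨0, le_refl 0, x, hx, by simp⟩
  have hu0 : (0:ℝ) < u := by simpa using hfu 0 h0
  have hfK : ∀ y ∈ convexTangentCone C x, f y ≤ 0 := by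
    intro y hy
    by_contra hpos
    push_neg at hpos
    obtain ⟨t, ht0, htbig⟩ : ∃ t : ℝ, 0 ≤ t ∧ u < t * f y := by
      refine ⟨(u + 1) / f y, by positivity, ?_⟩
      rw [div_mul_cancel₀]
      · linarith
      · exact ne_of_gt hpos
    have := hfu (t • y) (smul_mem_convexTangentCone ht0 hx hy)
    rw [map_smul, smul_eq_mul] at this
    linarith
  set v := (InnerProductSpace.toDual ℝ E).symm f with hv
  have hfv : ∀ y, ⟪v, y⟫ = f y := fun y => InnerProductSpace.toDual_symm_apply
  have hvN : v ∈ normalSet C x := by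
    intro z hz
    rw [hfv]
    exact hfK _ (subset_closure ⟨1, zero_le_one, z, hz, by simp⟩)
  have hw0 : ⟪v, w⟫ = 0 :=
    (Submodule.mem_orthogonal _ w).mp hw v (Submodule.subset_span hvN)
  rw [hfv] at hw0
  linarith [hu, hw0]

/-- Rank bound gives a lower bound on the dimension of the span of the normal cone. -/
lemma finrank_span_normal_ge {C : Set E} (hC : Convex ℝ C) {x : E} (hx : x ∈ C) {k : ℕ}
    (hrank : ∀ V : Submodule ℝ E, (V : Set E) ⊆ convexTangentCone C x → finrank ℝ V ≤ k) :
    finrank ℝ E - k ≤ finrank ℝ (Submodule.span ℝ (normalSet C x)) := by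
  have h1 := hrank (Submodule.span ℝ (normalSet C x))ᗮ (orth_normal_subset_tangent hC hx)
  have h2 := Submodule.finrank_add_finrank_orthogonal (Submodule.span ℝ (normalSet C x))
  omega

/-- The normal cone contains a relatively interior ball around some `v`. -/
lemma exists_ball_in_normal (C : Set E) (x : E) {m : ℕ}
    (hm : m ≤ finrank ℝ (Submodule.span ℝ (normalSet C x))) :
    ∃ (v : E) (e : Fin m → E) (ρ : ℝ), 0 < ρ ∧ Orthonormal ℝ e ∧
      ∀ (t : ℝ) (i : Fin m), |t| ≤ ρ → v + t • e i ∈ normalSet C x := by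
  classical
  set N := normalSet C x with hN
  set M := Submodule.span ℝ N with hM
  obtain ⟨b, hbN, hbspan, hbind⟩ := exists_linearIndependent ℝ N
  have hbFin : b.Finite := hbind.setFinite
  haveI : Fintype b := hbFin.fintype
  have hbM : ∀ w : b, (w : E) ∈ M := fun w => Submodule.subset_span (hbN w.2)
  let bM : b → M := fun w => ⟨(w : E), hbM w⟩
  have hbM_ind : LinearIndependent ℝ bM := by
    have : M.subtype ∘ bM = ((↑) : b → E) := rfl
    exact LinearIndependent.of_comp M.subtype (by rw [this]; exact hbind)
  have hbM_span : ⊤ ≤ Submodule.span ℝ (Set.range bM) := by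
    intro u _
    have hu : (u : E) ∈ Submodule.span ℝ b := by
      rw [hbspan]; exact u.2
    have : (u : E) ∈ Submodule.map M.subtype (Submodule.span ℝ (Set.range bM)) := by
      rw [Submodule.map_span]
      have : M.subtype '' (Set.range bM) = b := by
        ext y; constructor
        · rintro ⟨u', ⟨w, rfl⟩, rfl⟩; exact w.2
        · intro hy; exact ⟨bM ⟨y, hy⟩, ⟨⟨y, hy⟩, rfl⟩, rfl⟩
      rwa [this]
    obtain ⟨u', hu', hcoe⟩ := this
    have : u' = u := Subtype.ext hcoe
    rwa [← this]
  let B : Basis b ℝ M := Basis.mk hbM_ind hbM_span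
  let v : E := ∑ w : b, (w : E)
  have hvN : v ∈ N := normalSet_sum _ _ (fun w _ => hbN w.2)
  have hvM : v ∈ M := Submodule.subset_span hvN
  have key : ∀ u : M, (∀ j : b, |B.repr u j| ≤ 1) → v + (u : E) ∈ N := by
    intro u hu
    have hrepr : (u : E) = ∑ j : b, B.repr u j • (j : E) := by
      have := B.sum_repr u
      calc (u : E) = ((∑ j : b, B.repr u j • B j : M) : E) := by rw [this]
        _ = ∑ j : b, B.repr u j • (B j : E) := by push_cast; rfl
        _ = ∑ j : b, B.repr u j • (j : E) := by
            congr 1; ext j; congr 1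
            show ((B j : M) : E) = (j : E)
            rw [show B j = bM j from by simp [B, Basis.mk_apply]]
    have hv' : v + (u : E) = ∑ j : b, (1 + B.repr u j) • (j : E) := by
      rw [hrepr]
      simp [v, add_smul, one_smul, Finset.sum_add_distrib]
    rw [hv']
    refine normalSet_sum _ _ (fun j _ => normalSet_smul ?_ (hbN j.2))
    have habs := abs_le.mp (hu j)
    linarith [habs.1]
  let L : b → (M →L[ℝ] ℝ) := fun j => LinearMap.toContinuousLinearMap (B.coord j)
  let c : ℝ := ∑ j : b, ‖L j‖
  have hc0 : 0 ≤ c := Finset.sum_nonneg fun j _ => ContinuousLinearMap.opNorm_nonneg _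
  have hcoordbound : ∀ (u : M) (j : b), |B.repr u j| ≤ c * ‖u‖ := by
    intro u j
    have h1 : |B.repr u j| = ‖L j u‖ := by
      simp [L, Basis.coord_apply]
    rw [h1]
    calc ‖L j u‖ ≤ ‖L j‖ * ‖u‖ := (L j).le_opNorm u
      _ ≤ c * ‖u‖ := by
          apply mul_le_mul_of_nonneg_right _ (norm_nonneg u)
          exact Finset.single_le_sum (f := fun j => ‖L j‖)
            (fun j _ => ContinuousLinearMap.opNorm_nonneg (L j)) (Finset.mem_univ j)
  set ρ : ℝ := 1 / (c + 1) with hρ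
  have hρ0 : 0 < ρ := by positivity
  have hmM : m ≤ finrank ℝ M := hm
  let ob := stdOrthonormalBasis ℝ M
  let e : Fin m → E := fun i => (ob (Fin.castLE hmM i) : E)
  have he : Orthonormal ℝ e := by
    have h1 : Orthonormal ℝ (fun i : Fin m => ob (Fin.castLE hmM i)) :=
      ob.orthonormal.comp _ (Fin.castLE_injective _)
    constructor
    · intro i
      have := h1.1 i
      exact this
    · intro i j hij
      have := h1.2 hij
      simpa [e, Submodule.coe_inner] using this
  refine ⟨v, e, ρ, hρ0, he, ?_⟩
  intro t i hti
  let u : M := t • (ob (Fin.castLE hmM i))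
  have hnu : ‖u‖ ≤ ρ := by
    have : ‖u‖ = |t| * ‖ob (Fin.castLE hmM i)‖ := by
      simp [u, norm_smul]
    rw [this, ob.orthonormal.1 _]
    simpa using hti
  have hcoord : ∀ j : b, |B.repr u j| ≤ 1 := by
    intro j
    calc |B.repr u j| ≤ c * ‖u‖ := hcoordbound u j
      _ ≤ c * ρ := by nlinarith
      _ ≤ 1 := by
          rw [hρ, mul_one_div, div_le_one (by positivity)]
          linarith
  have := key u hcoord
  have hcoe : (u : E) = t • e i := by simp [u, e]
  rwa [hcoe] at this

/-- A set on which a map to Euclidean k-space is expanding (up to factor 2) is covered by a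
single Lipschitz image of Euclidean k-space. -/
lemma exists_lipschitz_cover {k : ℕ} (A : Set E) (π : E → EuclideanSpace ℝ (Fin k))
    (hπ : ∀ x ∈ A, ∀ y ∈ A, ‖x - y‖ ≤ 2 * ‖π x - π y‖) :
    ∃ (g : EuclideanSpace ℝ (Fin k) → E) (c : NNReal), LipschitzWith c g ∧ A ⊆ Set.range g := by
  classical
  rcases A.eq_empty_or_nonempty with hA | ⟨x₀, hx₀⟩
  · exact ⟨fun _ => 0, 0, LipschitzWith.const 0, by simp [hA]⟩
  haveI : Nonempty E := ⟨x₀⟩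
  set h : EuclideanSpace ℝ (Fin k) → E := Function.invFunOn π A with hh
  have hmemA : ∀ p ∈ π '' A, h p ∈ A ∧ π (h p) = p := by
    rintro p ⟨y, hy, rfl⟩
    exact ⟨Function.invFunOn_apply_mem hy, Function.invFunOn_apply_eq hy⟩
  have hinj : Set.InjOn π A := by
    intro a ha b hb hab
    have h0 : ‖a - b‖ ≤ 0 := by
      have := hπ a ha b hb
      rw [hab, sub_self, norm_zero, mul_zero] at this
      exact this
    have := norm_eq_zero.mp (le_antisymm h0 (norm_nonneg _))
    rwa [sub_eq_zero] at this
  have hlefti : ∀ x ∈ A, h (π x) = x := fun x hx => hinj.leftInvOn_invFunOn hx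
  have hLip : LipschitzOnWith 2 h (π '' A) := by
    apply LipschitzOnWith.of_dist_le_mul
    intro p hp q hq
    obtain ⟨hpA, hpe⟩ := hmemA p hp
    obtain ⟨hqA, hqe⟩ := hmemA q hq
    rw [dist_eq_norm, dist_eq_norm]
    calc ‖h p - h q‖ ≤ 2 * ‖π (h p) - π (h q)‖ := hπ _ hpA _ hqA
      _ = 2 * ‖p - q‖ := by rw [hpe, hqe]
  set n := finrank ℝ E with hn
  set iso := (stdOrthonormalBasis ℝ E).repr with hiso
  set h2 : EuclideanSpace ℝ (Fin k) → (Fin n → ℝ) :=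
    fun p => (WithLp.equiv 2 (Fin n → ℝ)) (iso (h p)) with hh2
  have hLip2 : LipschitzOnWith 2 h2 (π '' A) := by
    have l1 : LipschitzWith 1 (WithLp.equiv 2 (Fin n → ℝ)) := PiLp.lipschitzWith_ofLp (p := 2) (β := fun _ : Fin n => ℝ)
    have : LipschitzOnWith (1 * 2) (fun p => (WithLp.equiv 2 (Fin n → ℝ)) (iso (h p))) (π '' A) := by
      apply LipschitzWith.comp_lipschitzOnWith l1
      have : LipschitzOnWith (1 * 2) (fun p => iso (h p)) (π '' A) :=
        LipschitzWith.comp_lipschitzOnWith (iso.isometry.lipschitz) hLip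
      simpa using this
    simpa [hh2] using this
  obtain ⟨g2, hg2lip, hg2eq⟩ := hLip2.extend_pi
  set Lsym : (Fin n → ℝ) →L[ℝ] EuclideanSpace ℝ (Fin n) :=
    (PiLp.continuousLinearEquiv 2 ℝ (fun _ : Fin n => ℝ)).symm.toContinuousLinearMap with hLsym
  refine ⟨fun p => iso.symm (Lsym (g2 p)), ‖Lsym‖₊ * 2, ?_, ?_⟩
  · have : LipschitzWith (1 * (‖Lsym‖₊ * 2)) (fun p => iso.symm (Lsym (g2 p))) :=
      LipschitzWith.comp (iso.symm.isometry.lipschitz) (LipschitzWith.comp Lsym.lipschitz hg2lip)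
    simpa using this
  · intro x hx
    refine ⟨π x, ?_⟩
    have hmem : π x ∈ π '' A := ⟨x, hx, rfl⟩
    have heq : g2 (π x) = h2 (π x) := (hg2eq hmem).symm
    show iso.symm (Lsym (g2 (π x))) = x
    rw [heq]
    have hL : Lsym ((WithLp.equiv 2 (Fin n → ℝ)) (iso (h (π x)))) = iso (h (π x)) := rfl
    rw [show h2 (π x) = (WithLp.equiv 2 (Fin n → ℝ)) (iso (h (π x))) from rfl, hL,
      LinearIsometryEquiv.symm_apply_apply, hlefti x hx]

/-- If the dimension is at most `k`, all of `E` is a Lipschitz image of Euclidean k-space. -/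
lemma exists_lipschitz_surj {k : ℕ} (hk : finrank ℝ E ≤ k) :
    ∃ (g : EuclideanSpace ℝ (Fin k) → E) (c : NNReal), LipschitzWith c g ∧ Surjective g := by
  classical
  set n := finrank ℝ E with hn
  set b := stdOrthonormalBasis ℝ E with hb
  set L : EuclideanSpace ℝ (Fin k) →ₗ[ℝ] E :=
    { toFun := fun p => ∑ i : Fin n, p (Fin.castLE hk i) • b i
      map_add' := by intro p q; simp [add_smul, Finset.sum_add_distrib]
      map_smul' := by intro c p; simp [smul_smul, Finset.smul_sum] } with hL
  set Lc := LinearMap.toContinuousLinearMap L with hLc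
  refine ⟨Lc, ‖Lc‖₊, Lc.lipschitz, ?_⟩
  intro x
  refine ⟨WithLp.toLp 2 (fun j : Fin k => if hj : (j : ℕ) < n then ⟪b ⟨j, hj⟩, x⟫ else 0), ?_⟩
  show L _ = x
  rw [hL]
  simp only [LinearMap.coe_mk, AddHom.coe_mk]
  have : ∀ i : Fin n, (if hj : ((Fin.castLE hk i : Fin k) : ℕ) < n then
      ⟪b ⟨(Fin.castLE hk i : Fin k), hj⟩, x⟫ else 0) = ⟪b i, x⟫ := by
    intro i
    have hcast : ((Fin.castLE hk i : Fin k) : ℕ) < n := by simpa using i.2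
    rw [dif_pos hcast,
      show (⟨((Fin.castLE hk i : Fin k) : ℕ), hcast⟩ : Fin n) = i from Fin.ext (by simp)]
  calc (∑ i : Fin n, (if hj : ((Fin.castLE hk i : Fin k) : ℕ) < n then
        ⟪b ⟨((Fin.castLE hk i : Fin k) : ℕ), hj⟩, x⟫ else 0) • b i)
      = ∑ i : Fin n, ⟪b i, x⟫ • b i := by
        apply Finset.sum_congr rfl
        intro i _
        congr 1
        exact this i
    _ = x := b.sum_repr' x

/-- Each class set is covered by a single Lipschitz image of Euclidean k-space. -/
lemma classSet_cover (C : Set E) {m k : ℕ} (hmk : m + k = finrank ℝ E) {r ε : ℝ} (hr : 0 < r)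
    {p : E × (Fin m → E)} (hp : Orthonormal ℝ p.2)
    (hsmall : (m : ℝ) * (2 * ε / r + ε) ^ 2 ≤ 1 / 4) :
    ∃ (g : EuclideanSpace ℝ (Fin k) → E) (c : NNReal), LipschitzWith c g ∧
      classSet C r ε p ⊆ Set.range g := by
  classical
  have hcard : finrank ℝ E = Fintype.card (Fin m ⊕ Fin k) := by simp [hmk.symm]
  set v : Fin m ⊕ Fin k → E := Sum.elim p.2 (fun _ => 0) with hv
  set s : Set (Fin m ⊕ Fin k) := Set.range Sum.inl with hs
  have hres : Orthonormal ℝ (s.restrict v) := by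
    set q : Fin m ≃ ↥s := Equiv.ofInjective Sum.inl Sum.inl_injective with hq
    have hfun : s.restrict v = p.2 ∘ q.symm := by
      funext z
      have hz : (z : Fin m ⊕ Fin k) = Sum.inl (q.symm z) := by
        rw [hq]
        exact (Equiv.apply_ofInjective_symm Sum.inl_injective z).symm
      show v (z : Fin m ⊕ Fin k) = p.2 (q.symm z)
      rw [hz]
      rfl
    rw [hfun]
    exact hp.comp _ q.symm.injective
  obtain ⟨b, hb⟩ := hres.exists_orthonormalBasis_extension_of_card_eq hcard
  have hbl : ∀ i : Fin m, b (Sum.inl i) = p.2 i := fun i => hb (Sum.inl i) ⟨i, rfl⟩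
  set π : E → EuclideanSpace ℝ (Fin k) := fun d => WithLp.toLp 2 (fun j => ⟪b (Sum.inr j), d⟫) with hπdef
  have hπsub : ∀ x y : E, ∀ j : Fin k, (π x - π y) j = ⟪b (Sum.inr j), x - y⟫ := by
    intro x y j
    have : (π x - π y) j = π x j - π y j := rfl
    rw [this, hπdef, ← inner_sub_right]
  have hpars : ∀ d : E, ‖d‖ ^ 2 =
      (∑ i : Fin m, ⟪b (Sum.inl i), d⟫ ^ 2) + ∑ j : Fin k, ⟪b (Sum.inr j), d⟫ ^ 2 := by
    intro d
    have h1 : ‖d‖ = ‖b.repr d‖ := (b.repr.norm_map d).symm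
    rw [h1, PiLp.norm_sq_eq_of_L2, Fintype.sum_sum_type]
    congr 1
    · apply Finset.sum_congr rfl
      intro i _
      rw [b.repr_apply_apply, Real.norm_eq_abs, sq_abs]
    · apply Finset.sum_congr rfl
      intro j _
      rw [b.repr_apply_apply, Real.norm_eq_abs, sq_abs]
  apply exists_lipschitz_cover (classSet C r ε p) π
  intro x hx y hy
  set d := x - y with hd
  have hest : ∀ i : Fin m, |⟪p.2 i, d⟫| ≤ (2 * ε / r + ε) * ‖d‖ := by
    intro i
    have := classSet_inner_est C hr hy hx i
    rwa [← hd] at this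
  have hsum1 : (∑ i : Fin m, ⟪b (Sum.inl i), d⟫ ^ 2) ≤ (1 / 4) * ‖d‖ ^ 2 := by
    have hterm : ∀ i : Fin m, ⟪b (Sum.inl i), d⟫ ^ 2 ≤ ((2 * ε / r + ε) * ‖d‖) ^ 2 := by
      intro i
      rw [hbl i]
      have h := hest i
      have habs := abs_nonneg (⟪p.2 i, d⟫)
      nlinarith [sq_abs (⟪p.2 i, d⟫)]
    calc (∑ i : Fin m, ⟪b (Sum.inl i), d⟫ ^ 2) ≤ ∑ i : Fin m, ((2 * ε / r + ε) * ‖d‖) ^ 2 :=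
          Finset.sum_le_sum fun i _ => hterm i
      _ = (m : ℝ) * (2 * ε / r + ε) ^ 2 * ‖d‖ ^ 2 := by
          rw [Finset.sum_const, Finset.card_univ, Fintype.card_fin]
          ring
      _ ≤ (1 / 4) * ‖d‖ ^ 2 := by nlinarith [sq_nonneg ‖d‖]
  have hsum2 : ∑ j : Fin k, ⟪b (Sum.inr j), d⟫ ^ 2 = ‖π x - π y‖ ^ 2 := by
    rw [PiLp.norm_sq_eq_of_L2]
    apply Finset.sum_congr rfl
    intro j _
    rw [hπsub x y j, Real.norm_eq_abs, sq_abs, hd]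
  have hkey : ‖d‖ ^ 2 ≤ (2 * ‖π x - π y‖) ^ 2 := by
    have := hpars d
    nlinarith [sq_nonneg ‖π x - π y‖]
  have h2 : (0:ℝ) ≤ 2 * ‖π x - π y‖ := by positivity
  nlinarith [norm_nonneg d, norm_nonneg (π x - π y)]

end Aux

/-- Euclidean case of Proposition 4.1: the set of points of a closed convex set of rank at
most `k` (i.e. every linear subspace contained in the tangent cone has dimension at most `k`)
is countably `k`-rectifiable: it is covered by countably many Lipschitz images of `ℝ^k`. -/
theorem rank_le_k_set_countably_rectifiable
    {E : Type*} [NormedAddCommGroup E] [InnerProductSpace ℝ E] [FiniteDimensional ℝ E]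
    (C : Set E) (hCclosed : IsClosed C) (hCconv : Convex ℝ C)
    (k : ℕ) (hk : 1 ≤ k) :
    ∃ f : ℕ → EuclideanSpace ℝ (Fin k) → E,
      (∀ n, ∃ c : NNReal, LipschitzWith c (f n)) ∧
      {x ∈ C | ∀ V : Submodule ℝ E, (V : Set E) ⊆ convexTangentCone C x →
          Module.finrank ℝ V ≤ k} ⊆ ⋃ n, Set.range (f n) := by
  classical
  by_cases hdim : finrank ℝ E ≤ k
  · obtain ⟨g, c, hg, hsurj⟩ := exists_lipschitz_surj hdim
    refine ⟨fun _ => g, fun n => ⟨c, hg⟩, ?_⟩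
    intro x _
    exact Set.mem_iUnion.mpr ⟨0, hsurj x⟩
  push_neg at hdim
  set n := finrank ℝ E with hn
  set m := n - k with hm
  have hmk : m + k = n := Nat.sub_add_cancel (le_of_lt hdim)
  have hmn : m ≤ n := Nat.sub_le _ _
  -- the separable space of approximate frames
  set S : Set (E × (Fin m → E)) := {p | Orthonormal ℝ p.2} with hS
  haveI : Nonempty ↥S := by
    refine ⟨⟨(0, fun i => stdOrthonormalBasis ℝ E (Fin.castLE hmn i)), ?_⟩⟩
    exact (stdOrthonormalBasis ℝ E).orthonormal.comp _ (Fin.castLE_injective _)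
  obtain ⟨D, hDcount, hDdense⟩ := TopologicalSpace.exists_countable_dense ↥S
  haveI : Countable ↥D := hDcount.to_subtype
  haveI : Nonempty ↥D := (hDdense.nonempty).to_subtype
  -- the epsilon function
  set eps : ℝ → ℝ := fun r => r / (4 * (n + 1) * (r + 2)) with heps
  have heps_pos : ∀ r : ℝ, 0 < r → 0 < eps r := by
    intro r hr
    rw [heps]
    positivity
  have heps_small : ∀ r : ℝ, 0 < r → (m : ℝ) * (2 * eps r / r + eps r) ^ 2 ≤ 1 / 4 := by
    intro r hr
    have hkey : 2 * eps r / r + eps r = (r + 2) / (4 * (n + 1) * (r + 2)) := by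
      rw [heps]
      field_simp
      ring
    rw [hkey]
    have h2 : (r + 2) / (4 * (n + 1) * (r + 2)) = 1 / (4 * (n + 1)) := by
      rw [div_eq_div_iff (by positivity) (by positivity)]
      ring
    rw [h2]
    have hmn' : (m : ℝ) ≤ (n : ℝ) + 1 := by
      have : (m : ℝ) ≤ (n : ℝ) := Nat.cast_le.mpr hmn
      linarith
    have hnn : (0:ℝ) ≤ (n:ℝ) := Nat.cast_nonneg n
    rw [div_pow, one_pow, mul_one_div, div_le_div_iff₀ (by positivity) (by norm_num)]
    nlinarith
  -- the index type
  set ι := {q : ℚ // 0 < q} × ↥D with hι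
  haveI : Countable ι := by infer_instance
  haveI : Nonempty ι := by
    refine ⟨⟨⟨1, by norm_num⟩, Classical.arbitrary _⟩⟩
  -- Lipschitz cover for each index
  have hcover : ∀ i : ι, ∃ (g : EuclideanSpace ℝ (Fin k) → E) (c : NNReal), LipschitzWith c g ∧
      classSet C ((i.1 : ℚ) : ℝ) (eps ((i.1 : ℚ) : ℝ)) ((i.2 : ↥S) : E × (Fin m → E)) ⊆
        Set.range g := by
    intro i
    have hr : (0:ℝ) < ((i.1 : ℚ) : ℝ) := by exact_mod_cast i.1.2
    exact classSet_cover C hmk hr ((i.2 : ↥S)).2 (heps_small _ hr)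
  choose g c hLip hsub using hcover
  obtain ⟨u, hu⟩ := exists_surjective_nat ι
  refine ⟨fun nn => g (u nn), fun nn => ⟨c (u nn), hLip (u nn)⟩, ?_⟩
  -- coverage
  intro x hx
  obtain ⟨hxC, hrank⟩ := hx
  have hspan : m ≤ finrank ℝ (Submodule.span ℝ (normalSet C x)) := by
    have := finrank_span_normal_ge hCconv hxC hrank
    omega
  obtain ⟨v, e, ρ, hρ0, he, hball⟩ := exists_ball_in_normal C x hspan
  obtain ⟨q, hq0, hqρ⟩ := exists_rat_btwn hρ0
  have hq0' : (0:ℝ) < (q:ℝ) := hq0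
  have hq0'' : 0 < q := by exact_mod_cast hq0
  set p0 : ↥S := ⟨(v, e), he⟩ with hp0
  have hε : 0 < eps (q:ℝ) := heps_pos _ hq0'
  obtain ⟨p1, hp1ball, hp1D⟩ := Metric.dense_iff.mp hDdense p0 (eps (q:ℝ)) hε
  set i : ι := (⟨q, hq0''⟩, ⟨p1, hp1D⟩) with hi
  have hdist : dist (p0 : E × (Fin m → E)) (p1 : E × (Fin m → E)) < eps (q:ℝ) := by
    rw [← Subtype.dist_eq]
    rw [dist_comm]
    exact Metric.mem_ball.mp hp1ball
  have hd1 : ‖v - ((p1 : E × (Fin m → E))).1‖ ≤ eps (q:ℝ) := by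
    have h1 : dist v ((p1 : E × (Fin m → E))).1 ≤ dist (p0 : E × (Fin m → E)) (p1 : E × (Fin m → E)) := by
      rw [Prod.dist_eq]
      exact le_max_left _ _
    rw [← dist_eq_norm]
    exact le_of_lt (lt_of_le_of_lt h1 hdist)
  have hd2 : ∀ j : Fin m, ‖e j - ((p1 : E × (Fin m → E))).2 j‖ ≤ eps (q:ℝ) := by
    intro j
    have h1 : dist (e j) (((p1 : E × (Fin m → E))).2 j) ≤
        dist (p0 : E × (Fin m → E)).2 ((p1 : E × (Fin m → E))).2 :=
      dist_le_pi_dist _ _ j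
    have h2 : dist (p0 : E × (Fin m → E)).2 ((p1 : E × (Fin m → E))).2 ≤
        dist (p0 : E × (Fin m → E)) (p1 : E × (Fin m → E)) := by
      rw [Prod.dist_eq]
      exact le_max_right _ _
    rw [← dist_eq_norm]
    exact le_of_lt (lt_of_le_of_lt (le_trans h1 h2) hdist)
  have hmem : x ∈ classSet C ((q:ℚ) : ℝ) (eps ((q:ℚ) : ℝ)) ((p1 : ↥S) : E × (Fin m → E)) := by
    refine ⟨hxC, v, e, hd1, hd2, ?_⟩
    intro t j ht
    exact hball t j (le_trans ht (le_of_lt hqρ))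
  obtain ⟨nn, hnn⟩ := hu i
  apply Set.mem_iUnion.mpr
  refine ⟨nn, ?_⟩
  show x ∈ Set.range (g (u nn))
  rw [hnn]
  exact hsub i hmem
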